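/- If X*₁ and X*₂ are both numeraires (for the same 𝒫 and Q), then X*₁ = X*₂ Q-almost surely. -/
import Mathlib


open MeasureTheory ENNReal Filter Set Topology

variable {Ω : Type*} [MeasurableSpace Ω]

/-- Ratio of extended nonnegative reals with the convention `∞/∞ = 1`
(and `x/∞ = 0`, `∞/x = ∞` for finite `x`). -/
noncomputable def ERatio (x y : ℝ≥0∞) : ℝ≥0∞ := if x = ⊤ ∧ y = ⊤ then 1 else x / y

/-- `X` is an e-variable for the null hypothesis `Pfam`. -/
def IsEVar (Pfam : Set (Measure Ω)) (X : Ω → ℝ≥0∞) : Prop :=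
  Measurable X ∧ ∀ P ∈ Pfam, ∫⁻ ω, X ω ∂P ≤ 1

/-- `Xs` is a numeraire for null `Pfam` and alternative `Q`. -/
def IsNumeraire (Pfam : Set (Measure Ω)) (Q : Measure Ω) (Xs : Ω → ℝ≥0∞) : Prop :=
  IsEVar Pfam Xs ∧ (∀ᵐ ω ∂Q, 0 < Xs ω) ∧
    ∀ X, IsEVar Pfam X → ∫⁻ ω, ERatio (X ω) (Xs ω) ∂Q ≤ 1

lemma two_le_eratio_add {x y : ℝ≥0∞} (hx : 0 < x) (hy : 0 < y) :
    2 ≤ ERatio x y + ERatio y x := by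
  unfold ERatio
  rcases eq_or_ne x ⊤ with hx' | hx'
  · rcases eq_or_ne y ⊤ with hy' | hy'
    · simp [hx', hy']; norm_num
    · have hxy : x / y = ⊤ := by
        rw [hx', ENNReal.top_div]
        simp [hy']
      rw [if_neg (by simp [hy']), if_neg (by simp [hy']), hxy, top_add]
      exact le_top
  · rcases eq_or_ne y ⊤ with hy' | hy'
    · have hyx : y / x = ⊤ := by
        rw [hy', ENNReal.top_div]
        simp [hx']
      rw [if_neg (by simp [hx']), if_neg (by simp [hx']), hyx, add_top]
      exact le_top
    · simp only [hx', hy', and_false, false_and, if_false]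
      have hxy : x / y ≠ ⊤ := (ENNReal.div_lt_top hx' hy.ne').ne
      have hyx : y / x ≠ ⊤ := (ENNReal.div_lt_top hy' hx.ne').ne
      rw [← ENNReal.toReal_le_toReal (by norm_num) (ENNReal.add_ne_top.2 ⟨hxy, hyx⟩),
        ENNReal.toReal_add hxy hyx, ENNReal.toReal_div, ENNReal.toReal_div]
      have ha : 0 < x.toReal := ENNReal.toReal_pos hx.ne' hx'
      have hb : 0 < y.toReal := ENNReal.toReal_pos hy.ne' hy'
      have h2 : (2 : ℝ≥0∞).toReal = 2 := by simp
      rw [h2]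
      rw [div_add_div _ _ hb.ne' ha.ne', le_div_iff₀ (by positivity)]
      nlinarith [sq_nonneg (x.toReal - y.toReal)]

lemma eq_of_eratio_add_eq_two {x y : ℝ≥0∞} (hx : 0 < x) (hy : 0 < y)
    (h : ERatio x y + ERatio y x = 2) : x = y := by
  unfold ERatio at h
  rcases eq_or_ne x ⊤ with hx' | hx'
  · rcases eq_or_ne y ⊤ with hy' | hy'
    · rw [hx', hy']
    · exfalso
      have hd : x / y = ⊤ := by
        rw [hx', ENNReal.top_div]; simp [hy']
      rw [if_neg (by simp [hy']), if_neg (by simp [hy']), hd, top_add] at h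
      exact ENNReal.ofNat_ne_top h.symm
  · rcases eq_or_ne y ⊤ with hy' | hy'
    · exfalso
      have hd : y / x = ⊤ := by
        rw [hy', ENNReal.top_div]; simp [hx']
      rw [if_neg (by simp [hx']), if_neg (by simp [hx']), hd, add_top] at h
      exact ENNReal.ofNat_ne_top h.symm
    · simp only [hx', hy', and_false, false_and, if_false] at h
      have hxy : x / y ≠ ⊤ := (ENNReal.div_lt_top hx' hy.ne').ne
      have hyx : y / x ≠ ⊤ := (ENNReal.div_lt_top hy' hx.ne').ne
      have := congrArg ENNReal.toReal h
      rw [ENNReal.toReal_add hxy hyx, ENNReal.toReal_div, ENNReal.toReal_div] at this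
      have h2 : (2 : ℝ≥0∞).toReal = 2 := by simp
      rw [h2] at this
      have ha : 0 < x.toReal := ENNReal.toReal_pos hx.ne' hx'
      have hb : 0 < y.toReal := ENNReal.toReal_pos hy.ne' hy'
      have hab : x.toReal = y.toReal := by
        have hx2 := ha.ne'
        have hy2 := hb.ne'
        field_simp at this
        nlinarith [sq_nonneg (x.toReal - y.toReal)]
      exact (ENNReal.toReal_eq_toReal_iff' hx' hy').1 hab

lemma measurable_eratio {X Y : Ω → ℝ≥0∞} (hX : Measurable X) (hY : Measurable Y) :
    Measurable fun ω => ERatio (X ω) (Y ω) := by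
  unfold ERatio
  have hs : MeasurableSet {ω | X ω = ⊤ ∧ Y ω = ⊤} := by
    have : {ω | X ω = ⊤ ∧ Y ω = ⊤} = X ⁻¹' {⊤} ∩ Y ⁻¹' {⊤} := rfl
    rw [this]
    exact (hX (measurableSet_singleton ⊤)).inter (hY (measurableSet_singleton ⊤))
  exact Measurable.ite hs measurable_const (hX.div hY)

/-- Uniqueness of the numeraire up to Q-null sets. -/
theorem numeraire_unique (Pfam : Set (Measure Ω)) (hne : Pfam.Nonempty)
    (hprob : ∀ P ∈ Pfam, IsProbabilityMeasure P)
    (Q : Measure Ω) [IsProbabilityMeasure Q]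
    (Xs₁ Xs₂ : Ω → ℝ≥0∞)
    (h₁ : IsNumeraire Pfam Q Xs₁) (h₂ : IsNumeraire Pfam Q Xs₂) :
    Xs₁ =ᵐ[Q] Xs₂ := by
  obtain ⟨hE₁, hpos₁, hnum₁⟩ := h₁
  obtain ⟨hE₂, hpos₂, hnum₂⟩ := h₂
  set f : Ω → ℝ≥0∞ := fun ω => ERatio (Xs₁ ω) (Xs₂ ω) with hf_def
  set g : Ω → ℝ≥0∞ := fun ω => ERatio (Xs₂ ω) (Xs₁ ω) with hg_def
  have hf_meas : Measurable f := measurable_eratio hE₁.1 hE₂.1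
  have hg_meas : Measurable g := measurable_eratio hE₂.1 hE₁.1
  have hint : ∫⁻ ω, (f ω + g ω) ∂Q ≤ 2 := by
    rw [lintegral_add_left hf_meas]
    calc ∫⁻ ω, f ω ∂Q + ∫⁻ ω, g ω ∂Q ≤ 1 + 1 :=
          add_le_add (hnum₂ Xs₁ hE₁) (hnum₁ Xs₂ hE₂)
      _ = 2 := by norm_num
  have hconst : ∫⁻ _, (2 : ℝ≥0∞) ∂Q = 2 := by
    simp [lintegral_const, measure_univ]
  have hle : (fun _ => (2 : ℝ≥0∞)) ≤ᵐ[Q] fun ω => f ω + g ω := by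
    filter_upwards [hpos₁, hpos₂] with ω hω₁ hω₂
    exact two_le_eratio_add hω₁ hω₂
  have heq : (fun _ => (2 : ℝ≥0∞)) =ᵐ[Q] fun ω => f ω + g ω := by
    apply ae_eq_of_ae_le_of_lintegral_le hle (by rw [hconst]; norm_num)
      (hf_meas.add hg_meas).aemeasurable
    rw [hconst]; exact hint
  filter_upwards [hpos₁, hpos₂, heq] with ω hω₁ hω₂ hωeq
  exact eq_of_eratio_add_eq_two hω₁ hω₂ hωeq.symm
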